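/- arXiv:2007.07406 — 2 statements merged into one kernel-verified Lean document; each statement's English description precedes it below -/
import Mathlib

section
/- Let m₀ := sInf { M(v) : v Schwartz, v ≠ 0, V(v) = 0 }. If u : ℝ³ → ℂ is a Schwartz function with V(u) < 0, then M(u) > m₀. -/
open MeasureTheory

noncomputable section

abbrev E3 := EuclideanSpace ℝ (Fin 3)

/-- The mass. -/
def M (u : SchwartzMap E3 ℂ) : ℝ := ∫ x : E3, ‖u x‖ ^ 2

/-- The virial. -/
def V (u : SchwartzMap E3 ℂ) : ℝ :=
  ∫ x : E3, (‖fderiv ℝ u x‖ ^ 2 + ‖u x‖ ^ 6 - (3 / 4) * ‖u x‖ ^ 4)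

/-- The minimal mass of a nonzero zero-virial state. -/
def m₀ : ℝ := sInf {m : ℝ | ∃ v : SchwartzMap E3 ℂ, v ≠ 0 ∧ V v = 0 ∧ m = M v}

lemma schwartz_integrable_norm_pow {G : Type*} [NormedAddCommGroup G] [NormedSpace ℝ G]
    (f : SchwartzMap E3 G) (n : ℕ) (hn : 1 ≤ n) :
    Integrable (fun x => ‖f x‖ ^ n) (volume : Measure E3) := by
  obtain ⟨C, hC0, hC⟩ := f.decay 0 0
  simp only [pow_zero, one_mul, norm_iteratedFDeriv_zero] at hC
  apply Integrable.mono' ((f.integrable (μ := volume)).norm.const_mul (C ^ (n - 1)))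
  · exact (f.continuous.norm.pow n).aestronglyMeasurable
  · filter_upwards with x
    rw [Real.norm_of_nonneg (by positivity)]
    calc ‖f x‖ ^ n = ‖f x‖ ^ (n - 1) * ‖f x‖ := by
          rw [← pow_succ]; congr 1; omega
    _ ≤ C ^ (n - 1) * ‖f x‖ := by gcongr; exact hC x

lemma schwartz_integrable_fderiv_sq (u : SchwartzMap E3 ℂ) :
    Integrable (fun x => ‖fderiv ℝ u x‖ ^ 2) (volume : Measure E3) := by
  have := schwartz_integrable_norm_pow (SchwartzMap.fderivCLM ℝ E3 ℂ u) 2 (by norm_num)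
  simpa [SchwartzMap.fderivCLM_apply] using this

lemma schwartz_eq_zero_of_const (u : SchwartzMap E3 ℂ) (h : ∀ x, u x = u 0) : u = 0 := by
  obtain ⟨C, hC0, hC⟩ := u.decay 1 0
  simp only [pow_one, norm_iteratedFDeriv_zero] at hC
  have hu0 : u 0 = 0 := by
    by_contra h0
    have hn : 0 < ‖u 0‖ := norm_pos_iff.mpr h0
    set x : E3 := ((C + 1) / ‖u 0‖) • (EuclideanSpace.single 0 (1 : ℝ)) with hx
    have hnx : ‖x‖ = (C + 1) / ‖u 0‖ := by
      rw [hx, norm_smul, EuclideanSpace.norm_single, norm_one, mul_one, Real.norm_eq_abs,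
        abs_of_pos (div_pos (by linarith) hn)]
    have := hC x
    rw [h x, hnx, div_mul_cancel₀ _ (ne_of_gt hn)] at this
    linarith
  ext x
  rw [h x, hu0]; rfl

lemma fderiv_smul_schwartz (u : SchwartzMap E3 ℂ) (c : ℝ) (x : E3) :
    fderiv ℝ (⇑(c • u)) x = c • fderiv ℝ (⇑u) x := by
  have hcoe : ⇑(c • u) = fun y => c • u y := by
    ext y; exact SchwartzMap.smul_apply u c y
  rw [hcoe]
  exact fderiv_const_smul u.differentiableAt c

theorem negative_virial_mass_above_threshold (u : SchwartzMap E3 ℂ)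
    (hV : V u < 0) : M u > m₀ := by
  classical
  set A : ℝ := ∫ x : E3, ‖fderiv ℝ u x‖ ^ 2 with hA
  set B : ℝ := ∫ x : E3, ‖u x‖ ^ 6 with hB
  set Cq : ℝ := ∫ x : E3, ‖u x‖ ^ 4 with hCq
  have Ia := schwartz_integrable_fderiv_sq u
  have Ib := schwartz_integrable_norm_pow u 6 (by norm_num)
  have Ic := schwartz_integrable_norm_pow u 4 (by norm_num)
  have Im := schwartz_integrable_norm_pow u 2 (by norm_num)
  -- scaling formula
  have hVscale : ∀ c : ℝ, V (c • u) =
      c ^ 2 * A + c ^ 6 * B - (3 / 4 * c ^ 4) * Cq := by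
    intro c
    have hpt : ∀ x : E3, (‖fderiv ℝ (⇑(c • u)) x‖ ^ 2 + ‖(c • u) x‖ ^ 6
        - (3 / 4) * ‖(c • u) x‖ ^ 4)
        = c ^ 2 * ‖fderiv ℝ (⇑u) x‖ ^ 2 + c ^ 6 * ‖u x‖ ^ 6
          - (3 / 4 * c ^ 4) * ‖u x‖ ^ 4 := by
      intro x
      rw [fderiv_smul_schwartz, SchwartzMap.smul_apply (r := c)]
      have hT : ‖c • fderiv ℝ (⇑u) x‖ = |c| * ‖fderiv ℝ (⇑u) x‖ := by
        rw [norm_smul c (fderiv ℝ (⇑u) x), Real.norm_eq_abs]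
      rw [hT]
      simp only [norm_smul, Real.norm_eq_abs, mul_pow]
      have h2 : |c| ^ 2 = c ^ 2 := sq_abs c
      have h4 : |c| ^ 4 = c ^ 4 := by
        rw [show (4 : ℕ) = 2 * 2 by norm_num, pow_mul, pow_mul, sq_abs]
      have h6 : |c| ^ 6 = c ^ 6 := by
        rw [show (6 : ℕ) = 2 * 3 by norm_num, pow_mul, pow_mul, sq_abs]
      rw [h2, h4, h6]; ring
    have h1 : Integrable (fun x : E3 => c ^ 2 * ‖fderiv ℝ (⇑u) x‖ ^ 2
        + c ^ 6 * ‖u x‖ ^ 6) volume := (Ia.const_mul _).add (Ib.const_mul _)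
    have h2 : Integrable (fun x : E3 => (3 / 4 * c ^ 4) * ‖u x‖ ^ 4) volume :=
      Ic.const_mul _
    unfold V
    rw [integral_congr_ae (Filter.Eventually.of_forall hpt), integral_sub h1 h2,
      integral_add (Ia.const_mul _) (Ib.const_mul _),
      integral_const_mul, integral_const_mul, integral_const_mul]
  have hMscale : ∀ c : ℝ, M (c • u) = c ^ 2 * M u := by
    intro c
    have hpt : ∀ x : E3, ‖(c • u) x‖ ^ 2 = c ^ 2 * ‖u x‖ ^ 2 := by
      intro x
      rw [SchwartzMap.smul_apply (r := c)]
      simp only [norm_smul, Real.norm_eq_abs, mul_pow, sq_abs]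
    unfold M
    rw [integral_congr_ae (Filter.Eventually.of_forall hpt), integral_const_mul]
  -- u ≠ 0
  have hu_ne : u ≠ 0 := by
    intro h
    have h0 : (0 : ℝ) • u = u := by rw [h, smul_zero]
    have := hVscale 0
    rw [h0] at this
    have : V u = 0 := by rw [this]; norm_num
    linarith
  -- V u in terms of A B Cq
  have hVu : V u = A + B - (3 / 4) * Cq := by
    have h1 : (1 : ℝ) • u = u := one_smul _ _
    have := hVscale 1
    rw [h1] at this
    rw [this]; ring
  -- A > 0
  have hA_nonneg : 0 ≤ A := integral_nonneg fun x => by positivity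
  have hA_pos : 0 < A := by
    rcases lt_or_eq_of_le hA_nonneg with h | h
    · exact h
    have hae : (fun x : E3 => ‖fderiv ℝ (⇑u) x‖ ^ 2) =ᵐ[volume] 0 :=
      (integral_eq_zero_iff_of_nonneg (fun x => by positivity) Ia).mp h.symm
    have hcont : Continuous fun x : E3 => ‖fderiv ℝ (⇑u) x‖ ^ 2 := by
      have : Continuous fun x : E3 => fderiv ℝ (⇑u) x := by
        have := (SchwartzMap.fderivCLM ℝ E3 ℂ u).continuous
        simpa [funext fun x => SchwartzMap.fderivCLM_apply (𝕜 := ℝ) u x] using this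
      exact this.norm.pow 2
    have heq := (hcont.ae_eq_iff_eq (volume : Measure E3) (continuous_const (y := (0:ℝ)))).mp hae
    have hderiv0 : ∀ x : E3, fderiv ℝ (⇑u) x = 0 := by
      intro x
      have hx := congrFun heq x
      change (_ : ℝ) = 0 at hx
      exact norm_eq_zero.mp (pow_eq_zero_iff two_ne_zero |>.mp hx)
    have hconst : ∀ x : E3, u x = u 0 :=
      fun x => is_const_of_fderiv_eq_zero u.differentiable hderiv0 x 0
    exact absurd (schwartz_eq_zero_of_const u hconst) hu_ne
  -- M u > 0
  have hM_nonneg : 0 ≤ M u := integral_nonneg fun x => by positivity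
  have hM_pos : 0 < M u := by
    rcases lt_or_eq_of_le hM_nonneg with h | h
    · exact h
    have hae : (fun x : E3 => ‖u x‖ ^ 2) =ᵐ[volume] 0 :=
      (integral_eq_zero_iff_of_nonneg (fun x => by positivity) Im).mp h.symm
    have hcont : Continuous fun x : E3 => ‖u x‖ ^ 2 := u.continuous.norm.pow 2
    have heq := (hcont.ae_eq_iff_eq (volume : Measure E3) (continuous_const (y := (0:ℝ)))).mp hae
    have : u = 0 := by
      ext x
      have hx := congrFun heq x
      change (_ : ℝ) = 0 at hx
      have : ‖u x‖ = 0 := pow_eq_zero_iff two_ne_zero |>.mp hx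
      simpa using norm_eq_zero.mp this
    exact absurd this hu_ne
  -- the scaling polynomial
  set f : ℝ → ℝ := fun c => c ^ 2 * A + c ^ 6 * B - (3 / 4 * c ^ 4) * Cq with hf
  have hf_cont : Continuous f := by fun_prop
  have hf1 : f 1 < 0 := by
    have h1 : f 1 = A + B - 3 / 4 * Cq := by simp only [hf]; ring
    rw [h1, ← hVu]; exact hV
  -- find small ε with f ε > 0
  set g : ℝ → ℝ := fun c => A + c ^ 4 * B - (3 / 4 * c ^ 2) * Cq with hg
  have hg_cont : Continuous g := by fun_prop
  have hg0 : g 0 = A := by simp [hg]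
  have hgev : ∀ᶠ c in nhds (0 : ℝ), 0 < g c := by
    have h0 : (fun _ : ℝ => (0 : ℝ)) 0 < g 0 := by rw [hg0]; exact hA_pos
    exact continuousAt_const.eventually_lt hg_cont.continuousAt h0
  obtain ⟨δ, hδpos, hδ⟩ := Metric.eventually_nhds_iff.mp hgev
  set ε : ℝ := min (δ / 2) (1 / 2) with hε
  have hεpos : 0 < ε := lt_min (by linarith) (by norm_num)
  have hεlt1 : ε < 1 := lt_of_le_of_lt (min_le_right _ _) (by norm_num)
  have hgε : 0 < g ε := by
    apply hδ
    rw [Real.dist_eq, sub_zero, abs_of_pos hεpos]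
    exact lt_of_le_of_lt (min_le_left _ _) (by linarith)
  have hfε : 0 < f ε := by
    have h : f ε = ε ^ 2 * g ε := by simp only [hf, hg]; ring
    rw [h]
    positivity
  -- IVT
  have hsub : Set.Icc (f 1) (f ε) ⊆ f '' Set.Icc ε 1 :=
    intermediate_value_Icc' hεlt1.le hf_cont.continuousOn
  obtain ⟨c₀, hc₀mem, hc₀⟩ := hsub ⟨hf1.le, hfε.le⟩
  have hc₀pos : 0 < c₀ := lt_of_lt_of_le hεpos hc₀mem.1
  have hc₀lt1 : c₀ < 1 := by
    rcases lt_or_eq_of_le hc₀mem.2 with h | h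
    · exact h
    · exfalso; rw [h] at hc₀; linarith
  have hc₀' : c₀ ^ 2 * A + c₀ ^ 6 * B - (3 / 4 * c₀ ^ 4) * Cq = 0 := by
    simpa [hf] using hc₀
  set v : SchwartzMap E3 ℂ := c₀ • u with hv
  have hVv : V v = 0 := by rw [hv, hVscale c₀]; exact hc₀'
  have hv_ne : v ≠ 0 := by
    intro h
    apply hu_ne
    ext x
    have hvx : v x = 0 := by rw [h]; rfl
    rw [hv, SchwartzMap.smul_apply (r := c₀)] at hvx
    rcases smul_eq_zero.mp hvx with h' | h'
    · exact absurd h' (ne_of_gt hc₀pos)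
    · simpa using h'
  have hMv : M v = c₀ ^ 2 * M u := hMscale c₀
  have hMv_lt : M v < M u := by
    rw [hMv]
    have h1 : c₀ ^ 2 < 1 := by nlinarith
    calc c₀ ^ 2 * M u < 1 * M u := mul_lt_mul_of_pos_right h1 hM_pos
    _ = M u := one_mul _
  have hmem : M v ∈ {m : ℝ | ∃ w : SchwartzMap E3 ℂ, w ≠ 0 ∧ V w = 0 ∧ m = M w} :=
    ⟨v, hv_ne, hVv, rfl⟩
  have hbdd : BddBelow {m : ℝ | ∃ w : SchwartzMap E3 ℂ, w ≠ 0 ∧ V w = 0 ∧ m = M w} := by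
    refine ⟨0, fun m hm => ?_⟩
    obtain ⟨w, _, _, rfl⟩ := hm
    exact integral_nonneg fun x => by positivity
  have hle : m₀ ≤ M v := csInf_le hbdd hmem
  unfold m₀ at *
  linarith
end
end

section
/- Let u : ℝ → 𝓢(ℝ³; ℂ) be a continuously differentiable curve in the Schwartz space (with its usual topology) such that for all t ∈ ℝ and x ∈ ℝ³, i·(∂ₜu)(t,x) + (Δ u(t))(x) = −|u(t,x)|²·u(t,x) + |u(t,x)|⁴·u(t,x). Then the mass M(u(t)) = ∫_{ℝ³} |u(t,x)|² dx is independent of t. -/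
open MeasureTheory Filter

noncomputable section

/-- The Laplacian: sum of second partial derivatives. -/
def lap (f : E3 → ℂ) (x : E3) : ℂ :=
  ∑ i : Fin 3,
    fderiv ℝ (fun y => fderiv ℝ f y (EuclideanSpace.single i 1)) x
      (EuclideanSpace.single i 1)

namespace MassAux

open SchwartzMap Complex

abbrev SC := SchwartzMap E3 ℂ

def pderivCLM (_𝕜 : Type) (m : E3) : SC →L[ℝ] SC := LineDeriv.lineDerivOpCLM ℝ SC m

lemma pderivCLM_apply (𝕜 : Type) (m : E3) (f : SC) (x : E3) :
    pderivCLM 𝕜 m f x = fderiv ℝ f x m := rfl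

lemma pd_coe (e : E3) (f : SC) :
    ⇑(pderivCLM ℝ e f) = fun y => fderiv ℝ (⇑f) y e := by
  funext y; exact pderivCLM_apply ℝ e f y

def lapS (f : SC) : SC :=
  ∑ i : Fin 3, pderivCLM ℝ (EuclideanSpace.single i 1)
    (pderivCLM ℝ (EuclideanSpace.single i 1) f)

lemma lapS_apply (f : SC) (x : E3) : lapS f x = lap (⇑f) x := by
  rw [lapS, lap]
  have : (⇑(∑ i : Fin 3, pderivCLM ℝ (EuclideanSpace.single i 1)
      (pderivCLM ℝ (EuclideanSpace.single i 1) f)) : E3 → ℂ)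
      = ∑ i : Fin 3, ⇑(pderivCLM ℝ (EuclideanSpace.single i 1)
      (pderivCLM ℝ (EuclideanSpace.single i 1) f)) := by
    rw [← SchwartzMap.coe_coeHom, map_sum]
  rw [this, Finset.sum_apply]
  refine Finset.sum_congr rfl fun i _ => ?_
  rw [pderivCLM_apply, pd_coe]

lemma integrable_bdd_mul (f g : SC) {φ : E3 → ℂ}
    (hm : AEStronglyMeasurable φ (volume : Measure E3))
    (hb : ∀ x, ‖φ x‖ ≤ ‖f x‖ * ‖g x‖) : Integrable φ (volume : Measure E3) := by
  refine ((g.integrable (μ := volume)).norm.const_mul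
    ((SchwartzMap.seminorm ℝ 0 0) f)).mono' hm ?_
  filter_upwards with x
  refine (hb x).trans ?_
  exact mul_le_mul_of_nonneg_right (f.norm_le_seminorm ℝ x) (norm_nonneg _)

lemma integrable_conj_mul (f g : SC) :
    Integrable (fun x => (starRingEnd ℂ) (f x) * g x) (volume : Measure E3) := by
  refine integrable_bdd_mul f g ?_ ?_
  · exact ((Complex.continuous_conj.comp f.continuous).mul g.continuous).aestronglyMeasurable
  · intro x
    rw [norm_mul, RCLike.norm_conj]

end MassAux

lemma hasDerivAt_eval (u u' : ℝ → MassAux.SC)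
    (hderiv : ∀ t : ℝ,
      Tendsto (fun h : ℝ => h⁻¹ • (u (t + h) - u t)) (nhdsWithin 0 {0}ᶜ)
        (nhds (u' t))) (t : ℝ) (x : E3) :
    HasDerivAt (fun s => u s x) (u' t x) t := by
  rw [hasDerivAt_iff_tendsto_slope_zero]
  have h1 : Tendsto
      (fun h : ℝ => ((BoundedContinuousFunction.evalCLM ℝ x).comp (SchwartzMap.toBoundedContinuousFunctionCLM ℝ E3 ℂ)) (h⁻¹ • (u (t + h) - u t)))
      (nhdsWithin 0 {0}ᶜ) (nhds (((BoundedContinuousFunction.evalCLM ℝ x).comp (SchwartzMap.toBoundedContinuousFunctionCLM ℝ E3 ℂ)) (u' t))) :=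
    (((BoundedContinuousFunction.evalCLM ℝ x).comp (SchwartzMap.toBoundedContinuousFunctionCLM ℝ E3 ℂ)).continuous.tendsto _).comp (hderiv t)
  simpa [ContinuousLinearMap.comp_apply, BoundedContinuousFunction.evalCLM_apply, SchwartzMap.toBoundedContinuousFunctionCLM_apply, _root_.map_smul, map_sub] using h1

lemma continuous_of_hderiv (u u' : ℝ → MassAux.SC)
    (hderiv : ∀ t : ℝ,
      Tendsto (fun h : ℝ => h⁻¹ • (u (t + h) - u t)) (nhdsWithin 0 {0}ᶜ)
        (nhds (u' t))) : Continuous u := by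
  rw [continuous_iff_continuousAt]
  intro t
  have h1 : Tendsto (fun h : ℝ => u (t + h)) (nhdsWithin 0 {0}ᶜ) (nhds (u t)) := by
    have h2 : Tendsto (fun h : ℝ => u t + h • (h⁻¹ • (u (t + h) - u t)))
        (nhdsWithin 0 {0}ᶜ) (nhds (u t + (0 : ℝ) • u' t)) :=
      tendsto_const_nhds.add
        ((tendsto_nhdsWithin_of_tendsto_nhds tendsto_id).smul (hderiv t))
    rw [zero_smul, add_zero] at h2
    refine h2.congr' ?_
    filter_upwards [self_mem_nhdsWithin] with h hh
    rw [smul_inv_smul₀ hh]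
    abel
  have h2 : Tendsto (fun h : ℝ => u (t + h)) (nhds 0) (nhds (u t)) := by
    rw [← nhdsNE_sup_pure (0 : ℝ)]
    refine h1.sup ?_
    simpa using tendsto_pure_nhds (fun h : ℝ => u (t + h)) 0
  have h3 : Tendsto (fun s : ℝ => s - t) (nhds t) (nhds 0) := by
    simpa using (tendsto_id (x := nhds t)).sub_const t
  have h4 := h2.comp h3
  have : ((fun h : ℝ => u (t + h)) ∘ fun s : ℝ => s - t) = u := by
    funext s; simp
  unfold ContinuousAt
  rwa [this] at h4

lemma hasDerivAt_normSq {f : ℝ → ℂ} {f' : ℂ} {t : ℝ} (hf : HasDerivAt f f' t) :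
    HasDerivAt (fun s => ‖f s‖ ^ 2) (2 * ((starRingEnd ℂ) (f t) * f').re) t := by
  have hre : HasDerivAt (fun s => (f s).re) f'.re t :=
    Complex.reCLM.hasFDerivAt.comp_hasDerivAt t hf
  have him : HasDerivAt (fun s => (f s).im) f'.im t :=
    Complex.imCLM.hasFDerivAt.comp_hasDerivAt t hf
  have h1 : HasDerivAt (fun s => (f s).re * (f s).re + (f s).im * (f s).im)
      (f'.re * (f t).re + (f t).re * f'.re + (f'.im * (f t).im + (f t).im * f'.im)) t :=
    (hre.mul hre).add (him.mul him)
  have heq : (fun s => ‖f s‖ ^ 2) = fun s => (f s).re * (f s).re + (f s).im * (f s).im := by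
    funext s
    rw [← Complex.normSq_apply, ← Complex.sq_norm]
  rw [heq]
  convert h1 using 1
  simp [Complex.mul_re]
  ring

namespace MassAux

open SchwartzMap Complex

local notation "ee" i => EuclideanSpace.single i (1:ℝ)

lemma conj_hasFDerivAt (f : SC) (x : E3) :
    HasFDerivAt (fun y => (starRingEnd ℂ) (f y))
      ((Complex.conjCLE : ℂ →L[ℝ] ℂ).comp (fderiv ℝ (⇑f) x)) x := by
  exact (Complex.conjCLE : ℂ →L[ℝ] ℂ).hasFDerivAt.comp x (f.differentiableAt.hasFDerivAt)

lemma conj_fderiv (f : SC) (x : E3) (v : E3) :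
    fderiv ℝ (fun y => (starRingEnd ℂ) (f y)) x v = (starRingEnd ℂ) (fderiv ℝ (⇑f) x v) := by
  rw [(conj_hasFDerivAt f x).fderiv]
  rfl

lemma byparts (f : SC) (i : Fin 3) :
    ∫ x : E3, (starRingEnd ℂ) (f x) * (pderivCLM ℝ (ee i) (pderivCLM ℝ (ee i) f)) x
      = -∫ x : E3, (starRingEnd ℂ) ((pderivCLM ℝ (ee i) f) x) * (pderivCLM ℝ (ee i) f) x := by
  set g : SC := pderivCLM ℝ (ee i) f with hg
  have key := integral_mul_fderiv_eq_neg_fderiv_mul_of_integrable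
    (𝕜 := ℂ) (μ := (volume : Measure E3))
    (f := fun x => (starRingEnd ℂ) (f x)) (g := ⇑g) (v := ee i)
    ?_ ?_ ?_ ?_ ?_
  · calc ∫ x : E3, (starRingEnd ℂ) (f x) * (pderivCLM ℝ (ee i) g) x
        = ∫ x : E3, (starRingEnd ℂ) (f x) * fderiv ℝ (⇑g) x (ee i) := by
          simp only [pderivCLM_apply]
    _ = -∫ x : E3, fderiv ℝ (fun y => (starRingEnd ℂ) (f y)) x (ee i) * g x := key
    _ = -∫ x : E3, (starRingEnd ℂ) (g x) * g x := by
          congr 1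
          refine integral_congr_ae (Eventually.of_forall fun x => ?_)
          show fderiv ℝ (fun y => (starRingEnd ℂ) (f y)) x (ee i) * g x
            = (starRingEnd ℂ) (g x) * g x
          rw [conj_fderiv, ← pderivCLM_apply ℝ (ee i) f x]
  · -- Integrable fderiv(conj f) * g
    have : (fun x => fderiv ℝ (fun y => (starRingEnd ℂ) (f y)) x (ee i) * g x)
        = fun x => (starRingEnd ℂ) (g x) * g x := by
      funext x; rw [conj_fderiv, ← pderivCLM_apply ℝ (ee i) f x]
    rw [this]
    exact integrable_conj_mul g g
  · have : (fun x => (starRingEnd ℂ) (f x) * fderiv ℝ (⇑g) x (ee i))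
        = fun x => (starRingEnd ℂ) (f x) * (pderivCLM ℝ (ee i) g) x := by
      funext x; rw [pderivCLM_apply]
    rw [this]
    exact integrable_conj_mul f (pderivCLM ℝ (ee i) g)
  · exact integrable_conj_mul f g
  · exact fun x _ => ((Complex.conjCLE : ℂ →L[ℝ] ℂ).differentiable.differentiableAt).comp x
      f.differentiableAt
  · exact fun x _ => g.differentiableAt

end MassAux

namespace MassAux

open SchwartzMap Complex

local notation "ee" i => EuclideanSpace.single i (1:ℝ)

lemma lapS_apply_sum (f : SC) (x : E3) :
    lapS f x = ∑ i : Fin 3,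
      (pderivCLM ℝ (ee i) (pderivCLM ℝ (ee i) f)) x := by
  rw [lapS]
  have : (⇑(∑ i : Fin 3, pderivCLM ℝ (EuclideanSpace.single i 1)
      (pderivCLM ℝ (EuclideanSpace.single i 1) f)) : E3 → ℂ)
      = ∑ i : Fin 3, ⇑(pderivCLM ℝ (EuclideanSpace.single i 1)
      (pderivCLM ℝ (EuclideanSpace.single i 1) f)) := by
    rw [← SchwartzMap.coe_coeHom, map_sum]
  rw [this, Finset.sum_apply]

lemma im_integral_conj_mul_self (g : SC) :
    (∫ x : E3, (starRingEnd ℂ) (g x) * g x).im = 0 := by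
  have h : (∫ x : E3, (starRingEnd ℂ) (g x) * g x).im
      = ∫ x : E3, ((starRingEnd ℂ) (g x) * g x).im := by
    simpa using (Complex.imCLM.integral_comp_comm (integrable_conj_mul g g)).symm
  rw [h]
  have h2 : ∀ z : ℂ, ((starRingEnd ℂ) z * z).im = 0 := fun z => by
    simp [Complex.mul_im]
    ring
  simp [h2]

lemma im_total (f : SC) :
    (∫ x : E3, (starRingEnd ℂ) (f x) * lapS f x).im = 0 := by
  have hsum : (fun x : E3 => (starRingEnd ℂ) (f x) * lapS f x)
      = fun x => ∑ i : Fin 3, (starRingEnd ℂ) (f x)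
          * (pderivCLM ℝ (ee i) (pderivCLM ℝ (ee i) f)) x := by
    funext x
    rw [lapS_apply_sum, Finset.mul_sum]
  rw [hsum, integral_finset_sum _ (fun i _ => integrable_conj_mul f _)]
  rw [Complex.im_sum]
  refine Finset.sum_eq_zero fun i _ => ?_
  rw [byparts f i, Complex.neg_im, im_integral_conj_mul_self, neg_zero]

end MassAux

namespace MassAux

open SchwartzMap Complex

lemma deriv_zero (u u' : ℝ → SC)
    (hPDE : ∀ t : ℝ, ∀ x : E3,
      Complex.I * u' t x + lap (u t) x =
        -(‖u t x‖ : ℂ) ^ 2 * u t x + (‖u t x‖ : ℂ) ^ 4 * u t x) (t : ℝ) :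
    ∫ x : E3, 2 * ((starRingEnd ℂ) (u t x) * u' t x).re = 0 := by
  have hpt : ∀ x : E3, ((starRingEnd ℂ) (u t x) * u' t x).re
      = -((starRingEnd ℂ) (u t x) * lapS (u t) x).im := by
    intro x
    have h := hPDE t x
    rw [← lapS_apply] at h
    set z := u t x with hz
    set w := u' t x with hw
    set L := lapS (u t) x with hLdef
    have hL : L = -(Complex.I * w)
        + (((-(‖z‖ ^ 2) : ℝ) : ℂ) * z + (((‖z‖ ^ 4 : ℝ)) : ℂ) * z) := by
      push_cast
      linear_combination h
    rw [hL]
    simp only [Complex.add_im, Complex.add_re, Complex.neg_im, Complex.neg_re,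
      Complex.mul_im, Complex.mul_re,
      Complex.I_re, Complex.I_im, Complex.ofReal_re, Complex.ofReal_im,
      Complex.conj_re, Complex.conj_im]
    ring
  have h2 : (fun x : E3 => 2 * ((starRingEnd ℂ) (u t x) * u' t x).re)
      = fun x => (-2 : ℝ) * ((starRingEnd ℂ) (u t x) * lapS (u t) x).im := by
    funext x; rw [hpt]; ring
  rw [h2, integral_const_mul]
  have h3 : ∫ x : E3, ((starRingEnd ℂ) (u t x) * lapS (u t) x).im
      = (∫ x : E3, (starRingEnd ℂ) (u t x) * lapS (u t) x).im := by
    simpa using Complex.imCLM.integral_comp_comm (integrable_conj_mul (u t) (lapS (u t)))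
  rw [h3, im_total, mul_zero]

end MassAux

namespace MassAux

open SchwartzMap Complex

lemma integrable_normSq (f : SC) :
    Integrable (fun x : E3 => ‖f x‖ ^ 2) (volume : Measure E3) := by
  refine ((f.integrable (μ := volume)).norm.const_mul
    ((SchwartzMap.seminorm ℝ 0 0) f)).mono' ?_ ?_
  · exact ((f.continuous.norm).pow 2).aestronglyMeasurable
  · filter_upwards with x
    rw [Real.norm_eq_abs, _root_.abs_of_nonneg (by positivity), pow_two]
    exact mul_le_mul_of_nonneg_right (f.norm_le_seminorm ℝ x) (norm_nonneg _)

lemma decay_bound (v : ℝ → SC) (hv : Continuous v) (K : Set ℝ) (hK : IsCompact K) :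
    ∃ C : ℝ, 0 ≤ C ∧ ∀ t ∈ K, ∀ x : E3,
      ‖v t x‖ ≤ C * ((1 + ‖x‖) ^ 2)⁻¹ := by
  have hcomp : IsCompact (v '' K) := hK.image hv
  have hb := hcomp.totallyBounded.isVonNBounded ℝ
  rw [(schwartz_withSeminorms ℝ E3 ℂ).isVonNBounded_iff_finset_seminorm_bounded] at hb
  obtain ⟨r, hr, hle⟩ := hb (Finset.Iic (2, 0))
  refine ⟨2 ^ 2 * r, by positivity, fun t ht x => ?_⟩
  have h1 := one_add_le_sup_seminorm_apply (𝕜 := ℝ) (m := (2, 0)) (k := 2) (n := 0)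
    le_rfl le_rfl (v t) x
  rw [norm_iteratedFDeriv_zero] at h1
  have h2 : (Finset.Iic ((2 : ℕ), (0 : ℕ))).sup (schwartzSeminormFamily ℝ E3 ℂ) (v t) ≤ r :=
    (hle _ (Set.mem_image_of_mem v ht)).le
  have hx : (0 : ℝ) < (1 + ‖x‖) ^ 2 := by positivity
  rw [← div_eq_mul_inv, le_div_iff₀ hx]
  calc ‖v t x‖ * (1 + ‖x‖) ^ 2 = (1 + ‖x‖) ^ 2 * ‖v t x‖ := mul_comm _ _
    _ ≤ 2 ^ 2 * (Finset.Iic ((2 : ℕ), (0 : ℕ))).sup (schwartzSeminormFamily ℝ E3 ℂ) (v t) := h1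
    _ ≤ 2 ^ 2 * r := by gcongr

lemma mass_hasDerivAt (u u' : ℝ → SC)
    (hderiv : ∀ t : ℝ,
      Tendsto (fun h : ℝ => h⁻¹ • (u (t + h) - u t)) (nhdsWithin 0 {0}ᶜ)
        (nhds (u' t)))
    (hcont : Continuous u') (t₀ : ℝ) :
    HasDerivAt (fun t => ∫ x : E3, ‖u t x‖ ^ 2)
      (∫ x : E3, 2 * ((starRingEnd ℂ) (u t₀ x) * u' t₀ x).re) t₀ := by
  have hu_cont : Continuous u := continuous_of_hderiv u u' hderiv
  set K : Set ℝ := Set.Icc (t₀ - 1) (t₀ + 1) with hK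
  obtain ⟨C₁, hC₁0, hC₁⟩ := decay_bound u hu_cont K isCompact_Icc
  obtain ⟨C₂, hC₂0, hC₂⟩ := decay_bound u' hcont K isCompact_Icc
  set bound : E3 → ℝ := fun x => 2 * (C₁ * ((1 + ‖x‖) ^ 2)⁻¹ * (C₂ * ((1 + ‖x‖) ^ 2)⁻¹))
    with hbound
  have bound_int : Integrable bound (volume : Measure E3) := by
    have h34 : ((Module.finrank ℝ E3 : ℝ)) < 4 := by
      rw [finrank_euclideanSpace_fin]; norm_num
    have hint := (integrable_one_add_norm (μ := (volume : Measure E3)) h34).const_mul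
      (2 * (C₁ * C₂))
    have heq : (fun x : E3 => 2 * (C₁ * C₂) * (1 + ‖x‖) ^ (-(4 : ℝ))) = bound := by
      funext x
      have hx : (0 : ℝ) < 1 + ‖x‖ := by positivity
      rw [hbound]
      rw [Real.rpow_neg hx.le, show ((4 : ℝ)) = ((4 : ℕ) : ℝ) by norm_num,
        Real.rpow_natCast]
      rw [show (4 : ℕ) = 2 + 2 from rfl, pow_add, mul_inv]
      ring
    exact heq ▸ hint
  have h_meas : ∀ᶠ t in nhds t₀,
      AEStronglyMeasurable (fun x : E3 => ‖u t x‖ ^ 2) (volume : Measure E3) :=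
    Eventually.of_forall fun t => (((u t).continuous.norm).pow 2).aestronglyMeasurable
  have h_int : Integrable (fun x : E3 => ‖u t₀ x‖ ^ 2) (volume : Measure E3) :=
    integrable_normSq (u t₀)
  have h'_meas : AEStronglyMeasurable
      (fun x : E3 => 2 * ((starRingEnd ℂ) (u t₀ x) * u' t₀ x).re) (volume : Measure E3) := by
    apply Continuous.aestronglyMeasurable
    exact continuous_const.mul (Complex.continuous_re.comp
      ((Complex.continuous_conj.comp (u t₀).continuous).mul (u' t₀).continuous))
  have h_bound : ∀ᵐ x : E3 ∂(volume : Measure E3), ∀ t ∈ Metric.ball t₀ 1,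
      ‖2 * ((starRingEnd ℂ) (u t x) * u' t x).re‖ ≤ bound x := by
    refine Eventually.of_forall fun x t ht => ?_
    have htK : t ∈ K := by
      rw [hK]
      have h1 := Metric.mem_ball.mp ht
      rw [Real.dist_eq, abs_sub_lt_iff] at h1
      exact ⟨by linarith [h1.1, h1.2], by linarith [h1.1, h1.2]⟩
    have h2 : ‖(starRingEnd ℂ) (u t x) * u' t x‖
        ≤ C₁ * ((1 + ‖x‖) ^ 2)⁻¹ * (C₂ * ((1 + ‖x‖) ^ 2)⁻¹) := by
      rw [norm_mul, RCLike.norm_conj]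
      exact mul_le_mul (hC₁ t htK x) (hC₂ t htK x) (norm_nonneg _) (by positivity)
    calc ‖2 * ((starRingEnd ℂ) (u t x) * u' t x).re‖
        = 2 * |((starRingEnd ℂ) (u t x) * u' t x).re| := by
          rw [Real.norm_eq_abs, abs_mul]; norm_num
      _ ≤ 2 * ‖(starRingEnd ℂ) (u t x) * u' t x‖ := by
          have := Complex.abs_re_le_norm ((starRingEnd ℂ) (u t x) * u' t x)
          linarith
      _ ≤ bound x := by
          rw [hbound]
          simp only []
          linarith [h2]
  have h_diff : ∀ᵐ x : E3 ∂(volume : Measure E3), ∀ t ∈ Metric.ball t₀ 1,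
      HasDerivAt (fun t => ‖u t x‖ ^ 2)
        (2 * ((starRingEnd ℂ) (u t x) * u' t x).re) t :=
    Eventually.of_forall fun x t _ => hasDerivAt_normSq (hasDerivAt_eval u u' hderiv t x)
  exact (hasDerivAt_integral_of_dominated_loc_of_deriv_le
    (F := fun t x => ‖u t x‖ ^ 2)
    (F' := fun t x => 2 * ((starRingEnd ℂ) (u t x) * u' t x).re)
    (Metric.ball_mem_nhds t₀ one_pos) h_meas h_int h'_meas h_bound bound_int h_diff).2

end MassAux

theorem mass_conservation
    (u : ℝ → SchwartzMap E3 ℂ) (u' : ℝ → SchwartzMap E3 ℂ)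
    (hderiv : ∀ t : ℝ,
      Tendsto (fun h : ℝ => h⁻¹ • (u (t + h) - u t)) (nhdsWithin 0 {0}ᶜ)
        (nhds (u' t)))
    (hcont : Continuous u')
    (hPDE : ∀ t : ℝ, ∀ x : E3,
      Complex.I * u' t x + lap (u t) x =
        -(‖u t x‖ : ℂ) ^ 2 * u t x + (‖u t x‖ : ℂ) ^ 4 * u t x) :
    ∀ s t : ℝ, (∫ x : E3, ‖u s x‖ ^ 2) = ∫ x : E3, ‖u t x‖ ^ 2 := by
  intro s t
  have hM : ∀ r : ℝ, HasDerivAt (fun τ => ∫ x : E3, ‖u τ x‖ ^ 2) 0 r := by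
    intro r
    have h := MassAux.mass_hasDerivAt u u' hderiv hcont r
    rwa [MassAux.deriv_zero u u' hPDE r] at h
  exact is_const_of_deriv_eq_zero (fun r => (hM r).differentiableAt)
    (fun r => (hM r).deriv) s t
end
end
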